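/- Let (X, μ) be a finite measure space and Ω : X → ℝ a measurable function with ∫_X |Ω| log(2+|Ω|) dμ < ∞. Define E₁ = { x : |Ω(x)| ≤ 2 }, E_m = { x : 2^{m−1} < |Ω(x)| ≤ 2^m } for integers m ≥ 2, and e_m = μ(E_m). Then there is a constant C > 0, depending only on μ(X), such that ∑_{m=1}^∞ m · 2^m · e_m^{m/(m+1)} ≤ C ( ∫_X |Ω| log(2+|Ω|) dμ + 1 ). -/

import Mathlib

open MeasureTheory ENNReal Set

noncomputable section

/-- The level sets of `Ω`: `E₁ = {|Ω| ≤ 2}` and `E_m = {2^{m-1} < |Ω| ≤ 2^m}`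
for `m ≥ 2`. -/
def Eset {X : Type*} (Ω : X → ℝ) (m : ℕ) : Set X :=
  if m ≤ 1 then {x | |Ω x| ≤ 2} else {x | 2 ^ (m - 1) < |Ω x| ∧ |Ω x| ≤ 2 ^ m}

lemma aux_real (m : ℕ) : ((m:ℝ)+1) ≤ 8*(3/2)^m := by
  induction m with
  | zero => norm_num
  | succ m ih =>
      have h1 : (1:ℝ) ≤ (3/2)^m := one_le_pow₀ (by norm_num)
      push_cast
      rw [pow_succ]
      nlinarith

lemma aux_A (m : ℕ) :
    ((m:ℝ)+1) * 2^(m+1) * (2:ℝ)^(-(2:ℝ)*((m:ℝ)+1)) ≤ 4*(3/4:ℝ)^m := by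
  have h0 : (2:ℝ)^(-(2:ℝ)*((m:ℝ)+1)) = ((2:ℝ)^(2*(m+1):ℕ))⁻¹ := by
    rw [← Real.rpow_natCast 2 (2*(m+1)), ← Real.rpow_neg (by norm_num)]
    congr 1
    push_cast
    ring
  rw [h0]
  have h2 : ((m:ℝ)+1) ≤ 8*(3/2)^m := aux_real m
  have h3 : (0:ℝ) < 2^(m+1) := by positivity
  have h4 : ((2:ℝ)^(2*(m+1):ℕ)) = 2^(m+1) * 2^(m+1) := by
    rw [two_mul, pow_add]
  rw [h4, mul_inv]
  have h5 : ((m:ℝ)+1) * 2^(m+1) * ((2^(m+1))⁻¹ * (2^(m+1))⁻¹)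
      = ((m:ℝ)+1) * (2^(m+1))⁻¹ := by
    field_simp
  rw [h5]
  calc ((m:ℝ)+1) * ((2:ℝ)^(m+1))⁻¹ ≤ 8*(3/2)^m * ((2:ℝ)^(m+1))⁻¹ := by
        gcongr
    _ = 4*(3/4)^m := by
        rw [div_pow, div_pow]
        field_simp
        rw [show (4:ℝ)^m = 2^m*2^m from by rw [← mul_pow]; norm_num]
        ring

lemma key_rpow (m : ℕ) (a : ℝ≥0∞) :
    a ^ (((m:ℝ)+1)/((m:ℝ)+2)) ≤ (2:ℝ≥0∞) ^ (-(2:ℝ)*((m:ℝ)+1)) + 4 * a := by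
  set p : ℝ := ((m:ℝ)+1)/((m:ℝ)+2) with hp
  have hne : ((m:ℝ)+2) ≠ 0 := by positivity
  have hppos : 0 < p := by positivity
  set t : ℝ≥0∞ := (2:ℝ≥0∞) ^ (-(2:ℝ)*((m:ℝ)+2)) with ht
  rcases le_or_gt a t with h | h
  · have h1 : a ^ p ≤ t ^ p := ENNReal.rpow_le_rpow h hppos.le
    have h2 : t ^ p = (2:ℝ≥0∞) ^ (-(2:ℝ)*((m:ℝ)+1)) := by
      rw [ht, ← ENNReal.rpow_mul]
      congr 1
      rw [hp]
      field_simp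
    calc a ^ p ≤ t ^ p := h1
      _ = (2:ℝ≥0∞) ^ (-(2:ℝ)*((m:ℝ)+1)) := h2
      _ ≤ _ := le_self_add
  · rcases eq_or_ne a ⊤ with rfl | htop
    · have h0 : (4:ℝ≥0∞) * ⊤ = ⊤ := by simp
      simp [h0]
    · have ha0 : a ≠ 0 := by
        intro h0
        rw [h0] at h
        exact (not_lt_of_ge (zero_le : 0 ≤ t)) h
      have hq : (0:ℝ) < 1/((m:ℝ)+2) := by positivity
      have h4 : t ^ (1/((m:ℝ)+2)) = (2:ℝ≥0∞) ^ (-(2:ℝ)) := by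
        rw [ht, ← ENNReal.rpow_mul]
        congr 1
        field_simp
      have h5 : t ^ (1/((m:ℝ)+2)) ≤ a ^ (1/((m:ℝ)+2)) :=
        ENNReal.rpow_le_rpow h.le hq.le
      have h6 : a ^ p * a ^ (1/((m:ℝ)+2)) = a := by
        rw [← ENNReal.rpow_add _ _ ha0 htop]
        rw [show p + 1/((m:ℝ)+2) = 1 by rw [hp]; field_simp; ring, ENNReal.rpow_one]
      have h7 : a ^ p * (2:ℝ≥0∞) ^ (-(2:ℝ)) ≤ a :=
        calc a ^ p * (2:ℝ≥0∞) ^ (-(2:ℝ)) = a ^ p * t ^ (1/((m:ℝ)+2)) := by rw [h4]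
          _ ≤ a ^ p * a ^ (1/((m:ℝ)+2)) := mul_le_mul_right h5 _
          _ = a := h6
      have h8 : (2:ℝ≥0∞) ^ (-(2:ℝ)) = (4:ℝ≥0∞)⁻¹ := by
        rw [ENNReal.rpow_neg, show ((2:ℝ)) = ((2:ℕ):ℝ) by norm_num,
          ENNReal.rpow_natCast]
        norm_num
      have h9 : a ^ p ≤ 4 * a := by
        rw [h8] at h7
        have hc : (4:ℝ≥0∞) * (a ^ p * 4⁻¹) = a ^ p := by
          rw [mul_comm (a ^ p), ← mul_assoc,
            ENNReal.mul_inv_cancel (by norm_num) (by norm_num), one_mul]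
        calc a ^ p = 4 * (a ^ p * 4⁻¹) := hc.symm
          _ ≤ 4 * a := mul_le_mul_right h7 _
      exact h9.trans le_add_self

lemma Eset_meas {X : Type*} [MeasurableSpace X] {Ω : X → ℝ} (hΩ : Measurable Ω)
    (m : ℕ) : MeasurableSet (Eset Ω m) := by
  unfold Eset
  split
  · exact measurableSet_le hΩ.abs measurable_const
  · exact (measurableSet_lt measurable_const hΩ.abs).inter
      (measurableSet_le hΩ.abs measurable_const)

lemma Eset_succ {X : Type*} (Ω : X → ℝ) (m : ℕ) :
    Eset Ω (m+2) = {x | 2 ^ (m+1) < |Ω x| ∧ |Ω x| ≤ 2 ^ (m+2)} := by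
  unfold Eset
  rw [if_neg (by omega)]
  norm_num

lemma Eset_disj {X : Type*} (Ω : X → ℝ) :
    Pairwise (Function.onFun Disjoint fun i : ℕ => Eset Ω (i+2)) := by
  have key : ∀ i j : ℕ, i < j → Disjoint (Eset Ω (i+2)) (Eset Ω (j+2)) := by
    intro i j hij
    rw [Set.disjoint_left]
    intro x hxi hxj
    rw [Eset_succ] at hxi hxj
    have h1 : (2:ℝ)^(i+2) ≤ 2^(j+1) := by
      apply pow_le_pow_right₀ (by norm_num)
      omega
    have := hxi.2
    have := hxj.1
    linarith
  intro i j hij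
  rcases lt_or_gt_of_ne hij with h | h
  · exact key i j h
  · exact (key j i h).symm

lemma f_meas {X : Type*} [MeasurableSpace X] {Ω : X → ℝ} (hΩ : Measurable Ω) :
    Measurable fun x => ENNReal.ofReal (|Ω x| * Real.log (2+|Ω x|)) :=
  ENNReal.measurable_ofReal.comp
    ((hΩ.abs).mul (Real.measurable_log.comp (measurable_const.add hΩ.abs)))

lemma set_bound {X : Type*} [MeasurableSpace X] (μ : Measure X) {Ω : X → ℝ}
    (hΩ : Measurable Ω) (m : ℕ) :
    ((m:ℝ≥0∞)+2) * 2^(m+2) * μ (Eset Ω (m+2)) ≤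
      ENNReal.ofReal (4/Real.log 2) *
        ∫⁻ x in Eset Ω (m+2), ENNReal.ofReal (|Ω x| * Real.log (2+|Ω x|)) ∂μ := by
  have hlog : 0 < Real.log 2 := Real.log_pos (by norm_num)
  set c : ℝ := ((m:ℝ)+2)*2^(m+2)*(Real.log 2/4) with hc
  have hcpos : 0 < c := by positivity
  have hpt : ∀ x ∈ Eset Ω (m+2),
      ENNReal.ofReal c ≤ ENNReal.ofReal (|Ω x| * Real.log (2+|Ω x|)) := by
    intro x hx
    rw [Eset_succ] at hx
    obtain ⟨h1, h2⟩ := hx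
    apply ENNReal.ofReal_le_ofReal
    have hp : (0:ℝ) < 2^(m+1) := by positivity
    have ha : (2:ℝ)^(m+1) ≤ |Ω x| := h1.le
    have hb : (2:ℝ)^(m+1) ≤ 2 + |Ω x| := by
      have := abs_nonneg (Ω x); linarith
    have hcc : Real.log ((2:ℝ)^(m+1)) ≤ Real.log (2+|Ω x|) :=
      Real.log_le_log hp hb
    rw [Real.log_pow] at hcc
    push_cast at hcc
    have hlognn : (0:ℝ) ≤ ((m:ℝ)+1) * Real.log 2 := by positivity
    calc c ≤ 2^(m+1) * (((m:ℝ)+1)*Real.log 2) := by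
          rw [hc]
          have e1 : (2:ℝ)^(m+2) = 4 * 2^m := by rw [pow_succ, pow_succ]; ring
          have e2 : (2:ℝ)^(m+1) = 2 * 2^m := by rw [pow_succ]; ring
          rw [e1, e2]
          have hpm : (0:ℝ) < 2^m := by positivity
          nlinarith [mul_nonneg (mul_nonneg hpm.le hlog.le) (Nat.cast_nonneg m : (0:ℝ) ≤ m)]
      _ ≤ |Ω x| * Real.log (2+|Ω x|) :=
          mul_le_mul ha hcc hlognn (abs_nonneg _)
  have hint : ENNReal.ofReal c * μ (Eset Ω (m+2)) ≤
      ∫⁻ x in Eset Ω (m+2), ENNReal.ofReal (|Ω x| * Real.log (2+|Ω x|)) ∂μ := by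
    rw [← setLIntegral_const]
    exact setLIntegral_mono (f_meas hΩ) hpt
  have h9 : ((m:ℝ≥0∞)+2) * 2^(m+2) =
      ENNReal.ofReal (4/Real.log 2) * ENNReal.ofReal c := by
    rw [← ENNReal.ofReal_mul (by positivity)]
    have e3 : (4/Real.log 2) * c = (((m:ℝ)+2))*2^(m+2) := by
      rw [hc]; field_simp
    rw [e3, ENNReal.ofReal_mul (by positivity), ENNReal.ofReal_pow (by norm_num)]
    simp [ENNReal.ofReal_add (by positivity : (0:ℝ) ≤ (m:ℝ)) (by norm_num : (0:ℝ) ≤ 2),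
      ENNReal.ofReal_natCast]
  calc ((m:ℝ≥0∞)+2) * 2^(m+2) * μ (Eset Ω (m+2))
      = ENNReal.ofReal (4/Real.log 2) * (ENNReal.ofReal c * μ (Eset Ω (m+2))) := by
        rw [h9]; ring
    _ ≤ _ := mul_le_mul_right hint _

/-- The key extrapolation estimate: for a finite measure `μ` and `Ω` with
`∫ |Ω| log(2+|Ω|) dμ < ∞`, one has
`∑_{m≥1} m 2^m e_m^{m/(m+1)} ≤ C (∫ |Ω| log(2+|Ω|) dμ + 1)`, where `e_m = μ(E_m)`
and `C` depends only on `μ`. -/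
theorem statement19 {X : Type*} [MeasurableSpace X] (μ : Measure X)
    [IsFiniteMeasure μ] :
    ∃ C : ℝ, 0 < C ∧ ∀ Ω : X → ℝ, Measurable Ω →
      (∫⁻ x, ENNReal.ofReal (|Ω x| * Real.log (2 + |Ω x|)) ∂μ) < ⊤ →
      ∑' m : ℕ, (((m : ℝ≥0∞) + 1)) * 2 ^ (m + 1) *
          (μ (Eset Ω (m + 1))) ^ (((m:ℝ) + 1)/((m:ℝ) + 2)) ≤
        ENNReal.ofReal C *
          ((∫⁻ x, ENNReal.ofReal (|Ω x| * Real.log (2 + |Ω x|)) ∂μ) + 1) := by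
  have hlog : 0 < Real.log 2 := Real.log_pos (by norm_num)
  have htr : (0:ℝ) ≤ (μ Set.univ).toReal := ENNReal.toReal_nonneg
  refine ⟨16 + 8*(μ Set.univ).toReal + 16/Real.log 2, by positivity, ?_⟩
  intro Ω hΩ _
  set C : ℝ := 16 + 8*(μ Set.univ).toReal + 16/Real.log 2 with hC
  set f : X → ℝ≥0∞ := fun x => ENNReal.ofReal (|Ω x| * Real.log (2+|Ω x|)) with hf
  set I : ℝ≥0∞ := ∫⁻ x, f x ∂μ with hI
  have step1 : (∑' m : ℕ, ((m:ℝ≥0∞)+1) * 2^(m+1) *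
        (μ (Eset Ω (m+1))) ^ (((m:ℝ)+1)/((m:ℝ)+2)))
      ≤ (∑' m : ℕ, ((m:ℝ≥0∞)+1) * 2^(m+1) * (2:ℝ≥0∞)^(-(2:ℝ)*((m:ℝ)+1)))
        + ∑' m : ℕ, ((m:ℝ≥0∞)+1) * 2^(m+1) * (4 * μ (Eset Ω (m+1))) := by
    rw [← ENNReal.tsum_add]
    apply ENNReal.tsum_le_tsum
    intro m
    rw [← mul_add]
    exact mul_le_mul_right (key_rpow m _) _
  have sumA : (∑' m : ℕ, ((m:ℝ≥0∞)+1) * 2^(m+1) * (2:ℝ≥0∞)^(-(2:ℝ)*((m:ℝ)+1)))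
      ≤ ENNReal.ofReal 16 := by
    have hterm : ∀ m : ℕ, ((m:ℝ≥0∞)+1) * 2^(m+1) * (2:ℝ≥0∞)^(-(2:ℝ)*((m:ℝ)+1))
        ≤ ENNReal.ofReal (4*(3/4:ℝ)^m) := by
      intro m
      have e1 : ((m:ℝ≥0∞)+1) = ENNReal.ofReal ((m:ℝ)+1) := by
        rw [ENNReal.ofReal_add (by positivity) (by norm_num), ENNReal.ofReal_natCast]
        norm_num
      have e2 : (2:ℝ≥0∞)^(m+1) = ENNReal.ofReal ((2:ℝ)^(m+1)) := by
        rw [ENNReal.ofReal_pow (by norm_num)]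
        norm_num
      have e3 : (2:ℝ≥0∞)^(-(2:ℝ)*((m:ℝ)+1))
          = ENNReal.ofReal ((2:ℝ)^(-(2:ℝ)*((m:ℝ)+1))) := by
        rw [← ENNReal.ofReal_rpow_of_pos (by norm_num)]
        norm_num
      rw [e1, e2, e3, ← ENNReal.ofReal_mul (by positivity),
        ← ENNReal.ofReal_mul (by positivity)]
      exact ENNReal.ofReal_le_ofReal (aux_A m)
    have hsummable : Summable fun m : ℕ => 4*(3/4:ℝ)^m :=
      (summable_geometric_of_lt_one (by norm_num) (by norm_num)).mul_left 4
    calc (∑' m : ℕ, ((m:ℝ≥0∞)+1) * 2^(m+1) * (2:ℝ≥0∞)^(-(2:ℝ)*((m:ℝ)+1)))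
        ≤ ∑' m : ℕ, ENNReal.ofReal (4*(3/4:ℝ)^m) := ENNReal.tsum_le_tsum hterm
      _ = ENNReal.ofReal (∑' m : ℕ, 4*(3/4:ℝ)^m) :=
          (ENNReal.ofReal_tsum_of_nonneg (fun m => by positivity) hsummable).symm
      _ = ENNReal.ofReal 16 := by
          rw [tsum_mul_left, tsum_geometric_of_lt_one (by norm_num) (by norm_num)]
          norm_num
  have sumB : (∑' m : ℕ, ((m:ℝ≥0∞)+1) * 2^(m+1) * (4 * μ (Eset Ω (m+1))))
      ≤ 8 * μ Set.univ + ENNReal.ofReal (16/Real.log 2) * I := by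
    have e0 : ∀ m : ℕ, ((m:ℝ≥0∞)+1) * 2^(m+1) * (4 * μ (Eset Ω (m+1)))
        = 4 * (((m:ℝ≥0∞)+1) * 2^(m+1) * μ (Eset Ω (m+1))) := fun m => by ring
    simp_rw [e0]
    rw [ENNReal.tsum_mul_left,
      tsum_eq_zero_add' (f := fun m : ℕ => ((m:ℝ≥0∞)+1) * 2^(m+1) * μ (Eset Ω (m+1)))
        ENNReal.summable]
    have hG0 : (((0:ℕ):ℝ≥0∞)+1) * 2^(0+1) * μ (Eset Ω (0+1)) ≤ 2 * μ Set.univ := by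
      simp only [Nat.cast_zero, zero_add, pow_one, one_mul]
      exact mul_le_mul_right (measure_mono (subset_univ _)) 2
    have hGs : (∑' m : ℕ, (((m+1:ℕ):ℝ≥0∞)+1) * 2^((m+1)+1) * μ (Eset Ω ((m+1)+1)))
        ≤ ENNReal.ofReal (4/Real.log 2) * I := by
      have hterm : ∀ m : ℕ, (((m+1:ℕ):ℝ≥0∞)+1) * 2^((m+1)+1) * μ (Eset Ω ((m+1)+1))
          ≤ ENNReal.ofReal (4/Real.log 2) * ∫⁻ x in Eset Ω (m+2), f x ∂μ := by
        intro m
        have hsb := set_bound μ hΩ m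
        have ecast : (((m+1:ℕ):ℝ≥0∞)+1) = ((m:ℝ≥0∞)+2) := by push_cast; ring
        rw [show (m+1)+1 = m+2 from rfl, ecast]
        exact hsb
      calc (∑' m : ℕ, (((m+1:ℕ):ℝ≥0∞)+1) * 2^((m+1)+1) * μ (Eset Ω ((m+1)+1)))
          ≤ ∑' m : ℕ, ENNReal.ofReal (4/Real.log 2) * ∫⁻ x in Eset Ω (m+2), f x ∂μ :=
            ENNReal.tsum_le_tsum hterm
        _ = ENNReal.ofReal (4/Real.log 2) * ∑' m : ℕ, ∫⁻ x in Eset Ω (m+2), f x ∂μ :=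
            ENNReal.tsum_mul_left
        _ = ENNReal.ofReal (4/Real.log 2) * ∫⁻ x in ⋃ i : ℕ, Eset Ω (i+2), f x ∂μ := by
            rw [MeasureTheory.lintegral_iUnion (fun i => Eset_meas hΩ (i+2))
              (Eset_disj Ω) f]
        _ ≤ ENNReal.ofReal (4/Real.log 2) * I :=
            mul_le_mul_right (setLIntegral_le_lintegral _ _) _
    calc 4 * ((((0:ℕ):ℝ≥0∞)+1) * 2^(0+1) * μ (Eset Ω (0+1))
            + ∑' m : ℕ, (((m+1:ℕ):ℝ≥0∞)+1) * 2^((m+1)+1) * μ (Eset Ω ((m+1)+1)))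
        ≤ 4 * (2 * μ Set.univ + ENNReal.ofReal (4/Real.log 2) * I) :=
          mul_le_mul_right (add_le_add hG0 hGs) 4
      _ = 8 * μ Set.univ + ENNReal.ofReal (16/Real.log 2) * I := by
          rw [mul_add]
          congr 1
          · rw [← mul_assoc]; norm_num
          · rw [← mul_assoc]
            congr 1
            rw [show (16:ℝ)/Real.log 2 = 4*(4/Real.log 2) by ring,
              ENNReal.ofReal_mul (by norm_num)]
            norm_num
  have hA : ENNReal.ofReal 16 + 8 * μ Set.univ ≤ ENNReal.ofReal C := by
    have : ENNReal.ofReal (16 + 8*(μ Set.univ).toReal) ≤ ENNReal.ofReal C := by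
      apply ENNReal.ofReal_le_ofReal
      rw [hC]
      have : 0 < 16/Real.log 2 := by positivity
      linarith
    refine le_trans (le_of_eq ?_) this
    rw [ENNReal.ofReal_add (by norm_num) (by positivity),
      ENNReal.ofReal_mul (by norm_num), ENNReal.ofReal_toReal (measure_ne_top μ _)]
    norm_num
  have hB : ENNReal.ofReal (16/Real.log 2) ≤ ENNReal.ofReal C := by
    apply ENNReal.ofReal_le_ofReal
    rw [hC]; linarith
  calc (∑' m : ℕ, ((m:ℝ≥0∞)+1) * 2^(m+1) *
        (μ (Eset Ω (m+1))) ^ (((m:ℝ)+1)/((m:ℝ)+2)))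
      ≤ (∑' m : ℕ, ((m:ℝ≥0∞)+1) * 2^(m+1) * (2:ℝ≥0∞)^(-(2:ℝ)*((m:ℝ)+1)))
        + ∑' m : ℕ, ((m:ℝ≥0∞)+1) * 2^(m+1) * (4 * μ (Eset Ω (m+1))) := step1
    _ ≤ ENNReal.ofReal 16 + (8 * μ Set.univ + ENNReal.ofReal (16/Real.log 2) * I) :=
        add_le_add sumA sumB
    _ = (ENNReal.ofReal 16 + 8 * μ Set.univ) + ENNReal.ofReal (16/Real.log 2) * I := by
        rw [add_assoc]
    _ ≤ ENNReal.ofReal C + ENNReal.ofReal C * I :=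
        add_le_add hA (mul_le_mul_left hB I)
    _ = ENNReal.ofReal C * (I + 1) := by rw [mul_add, mul_one, add_comm]
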